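/- For every integer k ≥ 1, q_{k+1}² ≤ (1 − β_k)·q_k² + (4/β_k)·‖z_{k+1} − z_k‖². -/

import Mathlib

private lemma key_ineq (b a c : ℝ) (h0 : 0 < b) (h1 : b ≤ 1) (ha : 0 ≤ a) (hc : 0 ≤ c) :
    ((1 - b) * (a + 2 * c)) ^ 2 ≤ (1 - b) * a ^ 2 + (4 / b) * c ^ 2 := by
  rw [← mul_le_mul_iff_right₀ h0]
  have h : b * ((1 - b) * a ^ 2 + 4 / b * c ^ 2) = b * (1 - b) * a ^ 2 + 4 * c ^ 2 := by
    field_simp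
  rw [h]
  nlinarith [mul_nonneg (by linarith : (0:ℝ) ≤ 1 - b) (sq_nonneg (b * a - 2 * (1 - b) * c)),
    mul_nonneg (mul_nonneg (sq_nonneg c) h0.le) (by linarith : (0:ℝ) ≤ 2 - b)]

theorem stmt_8 {E : Type*} [NormedAddCommGroup E] [NormedSpace ℝ E]
    (β : ℕ → ℝ) (hβ0 : β 0 = 1) (hβ : ∀ k, 0 < β k ∧ β k ≤ 1)
    (z yhat : ℕ → E)
    (hyhat : ∀ t : ℕ, yhat (t + 1) = (1 - 1 / β t) • z t + (1 / β t) • z (t + 1))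
    (ζ : ℕ → ℕ → ℝ)
    (hζ : ∀ t k : ℕ, t ≤ k → ζ t k = β t * ∏ i ∈ Finset.Icc (t + 1) k, (1 - β i))
    (q m : ℕ → ℝ)
    (hq : ∀ k : ℕ, q (k + 1) = ∑ t ∈ Finset.range (k + 1), ζ t k * ‖z (k + 1) - yhat (t + 1)‖)
    (hm : ∀ k : ℕ, m (k + 1) = ∑ t ∈ Finset.range (k + 1), ζ t k * ‖z (k + 1) - yhat (t + 1)‖ ^ 2) :
    ∀ k : ℕ, 1 ≤ k →
      q (k + 1) ^ 2 ≤ (1 - β k) * q k ^ 2 + (4 / β k) * ‖z (k + 1) - z k‖ ^ 2 := by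
  have hζnn : ∀ t k : ℕ, t ≤ k → 0 ≤ ζ t k := by
    intro t k htk
    rw [hζ t k htk]
    refine mul_nonneg (hβ t).1.le (Finset.prod_nonneg fun i _ => ?_)
    linarith [(hβ i).2]
  have hζrec : ∀ t k : ℕ, t ≤ k → ζ t (k + 1) = (1 - β (k + 1)) * ζ t k := by
    intro t k htk
    rw [hζ t (k+1) (htk.trans (Nat.le_succ k)), hζ t k htk,
      Finset.prod_Icc_succ_top (Nat.succ_le_succ htk)]
    ring
  have hζdiag : ∀ k : ℕ, ζ k k = β k := by
    intro k
    rw [hζ k k le_rfl]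
    simp
  have hsum : ∀ n : ℕ, ∑ t ∈ Finset.range (n + 1), ζ t n = 1 := by
    intro n
    induction n with
    | zero => simp [hζdiag, hβ0]
    | succ n ih =>
      rw [Finset.sum_range_succ, hζdiag,
        Finset.sum_congr rfl (fun t ht => hζrec t n (Nat.lt_succ_iff.mp (Finset.mem_range.mp ht))),
        ← Finset.mul_sum, ih]
      ring
  have hqnn : ∀ n : ℕ, 0 ≤ q (n + 1) := by
    intro n
    rw [hq n]
    exact Finset.sum_nonneg fun t ht =>
      mul_nonneg (hζnn t n (Nat.lt_succ_iff.mp (Finset.mem_range.mp ht))) (norm_nonneg _)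
  intro k hk
  obtain ⟨j, rfl⟩ : ∃ j, k = j + 1 := ⟨k - 1, (Nat.succ_pred_eq_of_pos hk).symm⟩
  obtain ⟨hb0, hb1⟩ := hβ (j+1)
  have hdnn : (0:ℝ) ≤ ‖z (j+1+1) - z (j+1)‖ := norm_nonneg _
  have hlast : ‖z (j+1+1) - yhat (j+1+1)‖ = (1 / β (j+1) - 1) * ‖z (j+1+1) - z (j+1)‖ := by
    rw [hyhat (j+1)]
    have h1 : z (j+1+1) - ((1 - 1 / β (j+1)) • z (j+1) + (1 / β (j+1)) • z (j+1+1))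
        = (1 - 1 / β (j+1)) • (z (j+1+1) - z (j+1)) := by
      module
    have hnp : 1 - 1 / β (j+1) ≤ 0 := by
      have : 1 ≤ 1 / β (j+1) := by rw [le_div_iff₀ hb0]; linarith
      linarith
    have habs : |1 - 1 / β (j+1)| = 1 / β (j+1) - 1 := by
      rw [abs_of_nonpos hnp]; ring
    rw [h1, norm_smul, Real.norm_eq_abs, habs]
  have htri : ∀ t : ℕ, ‖z (j+1+1) - yhat (t+1)‖
      ≤ ‖z (j+1) - yhat (t+1)‖ + ‖z (j+1+1) - z (j+1)‖ := by
    intro t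
    have h : z (j+1+1) - yhat (t+1) = (z (j+1) - yhat (t+1)) + (z (j+1+1) - z (j+1)) := by abel
    rw [h]; exact norm_add_le _ _
  have hmain : q (j+1+1) ≤ (1 - β (j+1)) * (q (j+1) + 2 * ‖z (j+1+1) - z (j+1)‖) := by
    rw [hq (j+1), Finset.sum_range_succ, hζdiag, hlast]
    have hle : ∑ t ∈ Finset.range (j+1), ζ t (j+1) * ‖z (j+1+1) - yhat (t+1)‖
        ≤ ∑ t ∈ Finset.range (j+1),
            (1 - β (j+1)) * ζ t j * (‖z (j+1) - yhat (t+1)‖ + ‖z (j+1+1) - z (j+1)‖) := by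
      refine Finset.sum_le_sum fun t ht => ?_
      have htj : t ≤ j := Nat.lt_succ_iff.mp (Finset.mem_range.mp ht)
      rw [hζrec t j htj]
      have h4 : (0:ℝ) ≤ 1 - β (j+1) := by linarith
      have h3 : ζ t j * ‖z (j+1+1) - yhat (t+1)‖
          ≤ ζ t j * (‖z (j+1) - yhat (t+1)‖ + ‖z (j+1+1) - z (j+1)‖) :=
        mul_le_mul_of_nonneg_left (htri t) (hζnn t j htj)
      calc (1 - β (j+1)) * ζ t j * ‖z (j+1+1) - yhat (t+1)‖
          = (1 - β (j+1)) * (ζ t j * ‖z (j+1+1) - yhat (t+1)‖) := by ring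
        _ ≤ (1 - β (j+1)) * (ζ t j * (‖z (j+1) - yhat (t+1)‖ + ‖z (j+1+1) - z (j+1)‖)) :=
            mul_le_mul_of_nonneg_left h3 h4
        _ = (1 - β (j+1)) * ζ t j * (‖z (j+1) - yhat (t+1)‖ + ‖z (j+1+1) - z (j+1)‖) := by ring
    have heq : ∑ t ∈ Finset.range (j+1),
          (1 - β (j+1)) * ζ t j * (‖z (j+1) - yhat (t+1)‖ + ‖z (j+1+1) - z (j+1)‖)
        = (1 - β (j+1)) * (q (j+1) + ‖z (j+1+1) - z (j+1)‖) := by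
      have h2 : ∀ t ∈ Finset.range (j+1),
          (1 - β (j+1)) * ζ t j * (‖z (j+1) - yhat (t+1)‖ + ‖z (j+1+1) - z (j+1)‖)
          = (1 - β (j+1)) * (ζ t j * ‖z (j+1) - yhat (t+1)‖)
            + ((1 - β (j+1)) * ‖z (j+1+1) - z (j+1)‖) * ζ t j := by
        intro t ht; ring
      rw [Finset.sum_congr rfl h2, Finset.sum_add_distrib, ← Finset.mul_sum, ← Finset.mul_sum,
        hsum j, ← hq j]
      ring
    have hlast2 : β (j+1) * ((1 / β (j+1) - 1) * ‖z (j+1+1) - z (j+1)‖)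
        = (1 - β (j+1)) * ‖z (j+1+1) - z (j+1)‖ := by
      field_simp
    rw [hlast2]
    rw [heq] at hle
    linarith
  have hsq : q (j+1+1) ^ 2 ≤ ((1 - β (j+1)) * (q (j+1) + 2 * ‖z (j+1+1) - z (j+1)‖)) ^ 2 :=
    pow_le_pow_left₀ (hqnn (j+1)) hmain 2
  exact hsq.trans (key_ineq (β (j+1)) (q (j+1)) ‖z (j+1+1) - z (j+1)‖ hb0 hb1 (hqnn j) hdnn)
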